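/- A binary word x of length n satisfies dis(x) ≤ 3 (i.e., the gap between the maximum and minimum of its running digital sum sequence is at most 3) if and only if x is strongly (4,1)-locally balanced, i.e., for every even ℓ' ≥ 4 and every consecutive substring w of x of length ℓ', the Hamming weight of w satisfies ℓ'/2 - 1 ≤ wt(w) ≤ ℓ'/2 + 1. -/

import Mathlib

/-- Hamming weight of the substring of `x` of length `l` starting at (0-based) position `i`. -/
def subWt (n : ℕ) (x : Fin n → Bool) (i l : ℕ) : ℕ :=
  (Finset.univ.filter (fun j : Fin n => i ≤ (j : ℕ) ∧ (j : ℕ) < i + l ∧ x j = true)).card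

/-- `x` is `(l, δ)`-locally balanced: every consecutive substring of length `l` has weight
between `l/2 - δ` and `l/2 + δ`. -/
def locBal (l δ n : ℕ) (x : Fin n → Bool) : Prop :=
  ∀ i : ℕ, i + l ≤ n →
    (l : ℤ) / 2 - δ ≤ (subWt n x i l : ℤ) ∧ (subWt n x i l : ℤ) ≤ (l : ℤ) / 2 + δ

/-- Running digital sum: `s_i = 2·wt(x_1,…,x_i) − i`. -/
def rds (n : ℕ) (x : Fin n → Bool) (i : ℕ) : ℤ := 2 * (subWt n x 0 i : ℤ) - i

/-- `dis x` = max of the RDS sequence minus its min. -/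
def dis (n : ℕ) (x : Fin n → Bool) : ℤ :=
  Finset.sup' (Finset.range (n + 1)) Finset.nonempty_range_add_one (rds n x)
    - Finset.inf' (Finset.range (n + 1)) Finset.nonempty_range_add_one (rds n x)

/-- Number of `(6,1)`-locally balanced binary words of length `n`. -/
noncomputable def f (n : ℕ) : ℕ := Nat.card {x : Fin n → Bool // locBal 6 1 n x}

/-- `x` has the list `z` as a prefix. -/
def hasPrefix (n : ℕ) (x : Fin n → Bool) (z : List Bool) : Prop :=
  ∀ j : Fin z.length, ∃ h : (j : ℕ) < n, x ⟨j, h⟩ = z.get j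

/-- Number of `(6,1)`-locally balanced words of length `n` with prefix `z`. -/
noncomputable def fP (n : ℕ) (z : List Bool) : ℕ :=
  Nat.card {x : Fin n → Bool // locBal 6 1 n x ∧ hasPrefix n x z}

/-- Number of `(6,1)`-locally balanced words of length `n` whose first `s` entries have weight `t`. -/
noncomputable def fW (n s t : ℕ) : ℕ :=
  Nat.card {x : Fin n → Bool // locBal 6 1 n x ∧ subWt n x 0 s = t}


lemma subWt_le (n : ℕ) (x : Fin n → Bool) (i l : ℕ) : subWt n x i l ≤ l := by
  unfold subWt
  calc (Finset.univ.filter (fun j : Fin n => i ≤ (j : ℕ) ∧ (j : ℕ) < i + l ∧ x j = true)).card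
      ≤ (Finset.Ico i (i+l)).card := by
        refine Finset.card_le_card_of_injOn (fun j => (j:ℕ)) ?_ ?_
        · intro j hj
          simp only [Finset.mem_coe, Finset.mem_filter, Finset.mem_univ, true_and] at hj
          simp only [Finset.mem_coe, Finset.mem_Ico]
          exact ⟨hj.1, hj.2.1⟩
        · intro a _ b _ h; exact Fin.ext h
    _ = l := by simp

lemma subWt_add (n : ℕ) (x : Fin n → Bool) (i l : ℕ) :
    subWt n x 0 (i + l) = subWt n x 0 i + subWt n x i l := by
  unfold subWt
  rw [← Finset.card_union_of_disjoint]
  · congr 1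
    ext j
    simp only [Finset.mem_union, Finset.mem_filter, Finset.mem_univ, true_and, zero_add]
    constructor
    · rintro ⟨-, h2, h3⟩
      by_cases h : (j:ℕ) < i
      · exact Or.inl ⟨Nat.zero_le _, h, h3⟩
      · exact Or.inr ⟨Nat.le_of_not_lt h, h2, h3⟩
    · rintro (⟨-, h2, h3⟩ | ⟨h1, h2, h3⟩) <;> exact ⟨Nat.zero_le _, by omega, h3⟩
  · rw [Finset.disjoint_left]
    intro j h1 h2
    simp only [Finset.mem_filter, Finset.mem_univ, true_and, zero_add] at h1 h2
    omega

lemma rds_diff (n : ℕ) (x : Fin n → Bool) (i l : ℕ) :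
    rds n x (i + l) - rds n x i = 2 * (subWt n x i l : ℤ) - l := by
  unfold rds
  rw [subWt_add]
  push_cast
  ring

lemma rds_diff_abs_le (n : ℕ) (x : Fin n → Bool) (i l : ℕ) :
    |rds n x (i + l) - rds n x i| ≤ l := by
  rw [rds_diff]
  have h := subWt_le n x i l
  rw [abs_le]
  constructor <;> omega

lemma key_bound (n : ℕ) (x : Fin n → Bool)
    (H : ∀ l' : ℕ, Even l' → 4 ≤ l' → locBal l' 1 n x)
    (i l : ℕ) (hil : i + l ≤ n) : |rds n x (i + l) - rds n x i| ≤ 3 := by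
  rcases Nat.lt_or_ge l 4 with hl | hl
  · calc |rds n x (i + l) - rds n x i| ≤ l := rds_diff_abs_le n x i l
      _ ≤ 3 := by exact_mod_cast Nat.lt_succ_iff.mp hl
  · rcases Nat.even_or_odd l with he | ho
    · have hb := (H l he hl) i hil
      obtain ⟨m, hm⟩ := he
      have hdiv : (l : ℤ) / 2 = m := by omega
      rw [rds_diff, abs_le]
      omega
    · -- l odd, l ≥ 5
      obtain ⟨m0, hm0⟩ := ho
      have he : Even (l - 1) := ⟨m0, by omega⟩
      have hb := (H (l - 1) he (by omega)) (i + 1) (by omega)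
      have hd1 : rds n x (i + l) - rds n x (i+1) = 2 * (subWt n x (i+1) (l-1) : ℤ) - (l - 1 : ℕ) := by
        have := rds_diff n x (i+1) (l-1)
        rwa [show i + 1 + (l - 1) = i + l by omega] at this
      have hd2 := rds_diff n x i 1
      have hw2 := subWt_le n x i 1
      obtain ⟨m, hm⟩ := he
      have hdiv : ((l - 1 : ℕ) : ℤ) / 2 = m := by
        omega
      rw [abs_le]
      have hcast : ((l - 1 : ℕ) : ℤ) = (l : ℤ) - 1 := by push_cast [Nat.cast_sub (by omega : 1 ≤ l)]; ring
      rw [hdiv] at hb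
      rw [hcast] at hd1
      omega

/-- `dis x ≤ 3` iff `x` is strongly `(4,1)`-locally balanced. -/
theorem dis_le_three_iff_strongly_locally_balanced (n : ℕ) (x : Fin n → Bool) :
    dis n x ≤ 3 ↔ ∀ l' : ℕ, Even l' → 4 ≤ l' → locBal l' 1 n x := by

  constructor
  · intro hdis l' he hl i hil
    have ha : rds n x (i + l') ≤ Finset.sup' (Finset.range (n + 1)) Finset.nonempty_range_add_one (rds n x) :=
      Finset.le_sup' _ (Finset.mem_range.mpr (by omega))
    have hb : Finset.inf' (Finset.range (n + 1)) Finset.nonempty_range_add_one (rds n x) ≤ rds n x i :=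
      Finset.inf'_le _ (Finset.mem_range.mpr (by omega))
    have ha' : rds n x i ≤ Finset.sup' (Finset.range (n + 1)) Finset.nonempty_range_add_one (rds n x) :=
      Finset.le_sup' _ (Finset.mem_range.mpr (by omega))
    have hb' : Finset.inf' (Finset.range (n + 1)) Finset.nonempty_range_add_one (rds n x) ≤ rds n x (i + l') :=
      Finset.inf'_le _ (Finset.mem_range.mpr (by omega))
    unfold dis at hdis
    have h1 : rds n x (i + l') - rds n x i ≤ 3 := by omega
    have h2 : rds n x i - rds n x (i + l') ≤ 3 := by omega
    have hd := rds_diff n x i l'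
    obtain ⟨m, hm⟩ := he
    have hdiv : (l' : ℤ) / 2 = m := by omega
    rw [hdiv]
    omega
  · intro H
    obtain ⟨a, ha, hae⟩ := Finset.exists_mem_eq_sup' (Finset.nonempty_range_add_one (n := n)) (rds n x)
    obtain ⟨b, hb, hbe⟩ := Finset.exists_mem_eq_inf' (Finset.nonempty_range_add_one (n := n)) (rds n x)
    rw [Finset.mem_range] at ha hb
    unfold dis
    rw [hae, hbe]
    rcases Nat.le_total a b with hab | hab
    · have := key_bound n x H a (b - a) (by omega)
      rw [show a + (b - a) = b by omega, abs_le] at this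
      omega
    · have := key_bound n x H b (a - b) (by omega)
      rw [show b + (a - b) = a by omega, abs_le] at this
      omega
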